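/- Suppose g, h : ℝⁿ × ℝⁿ → ℝ satisfy |g(x,y)| ≤ c₁ e^{-‖x-y‖²/c₁} for a constant c₁ > 0 and that Γ is a group of isometries of ℝⁿ such that |{γ ∈ Γ : ‖x - γy‖ ≤ r}| ≤ c₂ e^{c₂ r} for all r > 0. Then the series ∑_{γ ∈ Γ} g(x, γ y) converges absolutely, with sum bounded by a constant depending only on c₁, c₂. -/
import Mathlib


open Metric

/-- Gaussian decay of a kernel plus exponential growth of orbit-point counts give absolute
convergence of the Poincaré-type series `∑_γ g (x, γ • y)`, with a bound depending only on
the constants `c₁, c₂`. -/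
theorem summable_kernel_over_group
    (n : ℕ) (g h : EuclideanSpace ℝ (Fin n) × EuclideanSpace ℝ (Fin n) → ℝ)
    {Γ : Type*} [Group Γ] [MulAction Γ (EuclideanSpace ℝ (Fin n))]
    (hiso : ∀ (γ : Γ) (a b : EuclideanSpace ℝ (Fin n)), dist (γ • a) (γ • b) = dist a b)
    (c₁ c₂ : ℝ) (hc₁ : 0 < c₁) (hc₂ : 0 < c₂)
    (hg : ∀ x y : EuclideanSpace ℝ (Fin n), |g (x, y)| ≤ c₁ * Real.exp (-‖x - y‖ ^ 2 / c₁))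
    (hcount : ∀ (x y : EuclideanSpace ℝ (Fin n)) (r : ℝ), 0 < r →
      {γ : Γ | ‖x - γ • y‖ ≤ r}.Finite ∧
        (Nat.card {γ : Γ | ‖x - γ • y‖ ≤ r} : ℝ) ≤ c₂ * Real.exp (c₂ * r)) :
    ∃ C : ℝ, ∀ x y : EuclideanSpace ℝ (Fin n),
      Summable (fun γ : Γ => |g (x, γ • y)|) ∧ ∑' γ : Γ, |g (x, γ • y)| ≤ C := by
  classical
  -- the comparison series
  set a : ℕ → ℝ := fun k =>
    (c₂ * Real.exp (c₂ * (k + 1))) * (c₁ * Real.exp (-(k : ℝ) ^ 2 / c₁)) with ha_def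
  have ha_nonneg : ∀ k, 0 ≤ a k := fun k => by positivity
  -- summability of the comparison series
  have ha : Summable a := by
    set K₀ : ℕ := ⌈c₁ * (c₂ + 1)⌉₊ with hK₀
    rw [← summable_nat_add_iff K₀]
    have hb : Summable fun k : ℕ => (c₂ * c₁ * Real.exp (c₂ + c₂)) * Real.exp (-(k : ℝ)) :=
      Real.summable_exp_neg_nat.mul_left _
    refine hb.of_nonneg_of_le (fun k => ha_nonneg _) fun k => ?_
    have hm : (c₂ + 1) * ((k : ℝ) + K₀) ≤ ((k : ℝ) + K₀) ^ 2 / c₁ := by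
      have h1 : c₁ * (c₂ + 1) ≤ (k : ℝ) + K₀ := by
        have h0 : c₁ * (c₂ + 1) ≤ (K₀ : ℝ) := Nat.le_ceil _
        have hk0 : (0:ℝ) ≤ (k : ℝ) := Nat.cast_nonneg k
        linarith
      have h2 : c₂ + 1 ≤ ((k : ℝ) + K₀) / c₁ := (le_div_iff₀' hc₁).2 h1
      have hpos : (0:ℝ) ≤ (k : ℝ) + K₀ := by positivity
      calc (c₂ + 1) * ((k : ℝ) + K₀) ≤ (((k : ℝ) + K₀) / c₁) * ((k : ℝ) + K₀) :=
            mul_le_mul_of_nonneg_right h2 hpos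
        _ = ((k : ℝ) + K₀) ^ 2 / c₁ := by ring
    have hexp : c₂ * (((k + K₀ : ℕ) : ℝ) + 1) + (-((k + K₀ : ℕ) : ℝ) ^ 2 / c₁)
        ≤ (c₂ + c₂) + (-(k : ℝ)) := by
      push_cast
      rw [neg_div]
      have hK0 : (0:ℝ) ≤ (K₀ : ℝ) := Nat.cast_nonneg K₀
      linarith [hm, hc₂]
    calc a (k + K₀) = c₂ * c₁ *
          Real.exp (c₂ * (((k + K₀ : ℕ) : ℝ) + 1) + (-((k + K₀ : ℕ) : ℝ) ^ 2 / c₁)) := by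
          rw [ha_def, Real.exp_add]; ring
      _ ≤ c₂ * c₁ * Real.exp ((c₂ + c₂) + (-(k : ℝ))) :=
          mul_le_mul_of_nonneg_left (Real.exp_le_exp.2 hexp) (by positivity)
      _ = (c₂ * c₁ * Real.exp (c₂ + c₂)) * Real.exp (-(k : ℝ)) := by
          rw [Real.exp_add]; ring
  refine ⟨∑' k, a k, fun x y => ?_⟩
  set f : Γ → ℝ := fun γ => |g (x, γ • y)| with hf_def
  set K : Γ → ℕ := fun γ => ⌊‖x - γ • y‖⌋₊ with hK_def
  -- every finite partial sum is bounded by the tsum of `a`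
  have key : ∀ s : Finset Γ, ∑ γ ∈ s, f γ ≤ ∑' k, a k := by
    intro s
    have hfib : ∑ k ∈ s.image K, ∑ γ ∈ s.filter (fun γ => K γ = k), f γ = ∑ γ ∈ s, f γ :=
      Finset.sum_fiberwise_of_maps_to (fun γ hγ => Finset.mem_image_of_mem K hγ) f
    rw [← hfib]
    have hinner : ∀ k ∈ s.image K, ∑ γ ∈ s.filter (fun γ => K γ = k), f γ ≤ a k := by
      intro k _
      have hr : (0 : ℝ) < (k : ℝ) + 1 := by positivity
      obtain ⟨hfin, hcard⟩ := hcount x y ((k : ℝ) + 1) hr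
      -- termwise bound
      have hterm : ∀ γ ∈ s.filter (fun γ => K γ = k),
          f γ ≤ c₁ * Real.exp (-(k : ℝ) ^ 2 / c₁) := by
        intro γ hγ
        have hk : K γ = k := (Finset.mem_filter.1 hγ).2
        have hge : (k : ℝ) ≤ ‖x - γ • y‖ := by
          rw [← hk]; exact Nat.floor_le (norm_nonneg _)
        have hsq : (k : ℝ) ^ 2 ≤ ‖x - γ • y‖ ^ 2 := by
          have : (0:ℝ) ≤ (k:ℝ) := Nat.cast_nonneg _
          nlinarith
        calc f γ ≤ c₁ * Real.exp (-‖x - γ • y‖ ^ 2 / c₁) := hg x (γ • y)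
          _ ≤ c₁ * Real.exp (-(k : ℝ) ^ 2 / c₁) := by
              have hnum : -‖x - γ • y‖ ^ 2 / c₁ ≤ -(k : ℝ) ^ 2 / c₁ := by
                rw [div_le_div_iff₀ hc₁ hc₁]
                nlinarith [hsq, hc₁.le]
              exact mul_le_mul_of_nonneg_left (Real.exp_le_exp.2 hnum) hc₁.le
      -- cardinality bound
      have hsub : ↑(s.filter (fun γ => K γ = k)) ⊆ {γ : Γ | ‖x - γ • y‖ ≤ (k : ℝ) + 1} := by
        intro γ hγ
        simp only [Finset.coe_filter, Set.mem_setOf_eq] at hγ ⊢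
        have hk : K γ = k := hγ.2
        have := Nat.lt_floor_add_one ‖x - γ • y‖
        rw [hK_def] at hk
        rw [← hk]
        push_cast
        exact this.le
      have hcard2 : ((s.filter (fun γ => K γ = k)).card : ℝ)
          ≤ c₂ * Real.exp (c₂ * ((k : ℝ) + 1)) := by
        have h1 : (s.filter (fun γ => K γ = k)).card
            ≤ {γ : Γ | ‖x - γ • y‖ ≤ (k : ℝ) + 1}.ncard := by
          rw [← Set.ncard_coe_finset]
          exact Set.ncard_le_ncard hsub hfin
        have h2 : Nat.card {γ : Γ | ‖x - γ • y‖ ≤ (k : ℝ) + 1}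
            = {γ : Γ | ‖x - γ • y‖ ≤ (k : ℝ) + 1}.ncard := Nat.card_coe_set_eq _
        calc ((s.filter (fun γ => K γ = k)).card : ℝ)
            ≤ (Nat.card {γ : Γ | ‖x - γ • y‖ ≤ (k : ℝ) + 1} : ℝ) := by
              rw [h2]; exact_mod_cast h1
          _ ≤ c₂ * Real.exp (c₂ * ((k : ℝ) + 1)) := hcard
      calc ∑ γ ∈ s.filter (fun γ => K γ = k), f γ
          ≤ (s.filter (fun γ => K γ = k)).card • (c₁ * Real.exp (-(k : ℝ) ^ 2 / c₁)) :=
            Finset.sum_le_card_nsmul _ _ _ hterm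
        _ = ((s.filter (fun γ => K γ = k)).card : ℝ) * (c₁ * Real.exp (-(k : ℝ) ^ 2 / c₁)) := by
            rw [nsmul_eq_mul]
        _ ≤ (c₂ * Real.exp (c₂ * ((k : ℝ) + 1))) * (c₁ * Real.exp (-(k : ℝ) ^ 2 / c₁)) := by
            exact mul_le_mul_of_nonneg_right hcard2 (by positivity)
        _ = a k := by rw [ha_def]
    calc ∑ k ∈ s.image K, ∑ γ ∈ s.filter (fun γ => K γ = k), f γ
        ≤ ∑ k ∈ s.image K, a k := Finset.sum_le_sum hinner
      _ ≤ ∑' k, a k := Summable.sum_le_tsum _ (fun k _ => ha_nonneg k) ha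
  have hsummable : Summable f := summable_of_sum_le (fun γ => abs_nonneg _) key
  exact ⟨hsummable, Summable.tsum_le_of_sum_le hsummable key⟩
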